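/- Let 0 < L < d₃ with d₃² < 3L², and set ρ₁ = 3L² − d₃². Define f on the interval I = [(d₃ − L)/2, (d₃ + L)/2] by f(d₁) = (1 − (2d₁ − d₃)²/L²) / (d₁³ (d₃ − d₁)³). Then the set of points of I at which f attains its global maximum is exactly { d₃/2 − √(2ρ₁)/4 , d₃/2 + √(2ρ₁)/4 }, the interior critical points of f are exactly d₃/2 and d₃/2 ± √(2ρ₁)/4, and d₁ = d₃/2 is a strict local minimum of f. -/

import Mathlib

open Real Filter

set_option maxHeartbeats 4000000 in
/-- Theorem 1, quadratic power scaling case: on the ellipse parametrized by the distance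
`d₁` to the transmitter, the quadratic-regime objective
`f(d₁) = (1 − (2d₁ − d₃)²/L²)/(d₁³ (d₃ − d₁)³)` is maximized exactly at
`d₃/2 ± √(2ρ₁)/4` with `ρ₁ = 3L² − d₃²`; its interior critical points are exactly
`d₃/2` and `d₃/2 ± √(2ρ₁)/4`, and `d₃/2` is a strict local minimum. -/
theorem optimal_placement_quadratic (d₃ L ρ₁ : ℝ) (hL : 0 < L) (hLd : L < d₃)
    (hd₃L : d₃ ^ 2 < 3 * L ^ 2) (hρ₁ : ρ₁ = 3 * L ^ 2 - d₃ ^ 2)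
    (f : ℝ → ℝ)
    (hf : ∀ x, f x = (1 - (2 * x - d₃) ^ 2 / L ^ 2) / (x ^ 3 * (d₃ - x) ^ 3)) :
    ({x ∈ Set.Icc ((d₃ - L) / 2) ((d₃ + L) / 2) |
        ∀ y ∈ Set.Icc ((d₃ - L) / 2) ((d₃ + L) / 2), f y ≤ f x} =
      {d₃ / 2 - Real.sqrt (2 * ρ₁) / 4, d₃ / 2 + Real.sqrt (2 * ρ₁) / 4}) ∧
    ({x ∈ Set.Ioo ((d₃ - L) / 2) ((d₃ + L) / 2) | deriv f x = 0} =
      {d₃ / 2 - Real.sqrt (2 * ρ₁) / 4, d₃ / 2, d₃ / 2 + Real.sqrt (2 * ρ₁) / 4}) ∧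
    (∀ᶠ y in nhdsWithin (d₃ / 2) {d₃ / 2}ᶜ, f (d₃ / 2) < f y) := by
  have hL0 : L ≠ 0 := ne_of_gt hL
  have hL2 : (0:ℝ) < L ^ 2 := by positivity
  have hρpos : 0 < ρ₁ := by rw [hρ₁]; linarith
  have hdL2 : 0 < d₃ ^ 2 - L ^ 2 := by nlinarith
  set s : ℝ := Real.sqrt (2 * ρ₁) / 4 with hs
  have hspos : 0 < s := div_pos (Real.sqrt_pos.mpr (by linarith)) (by norm_num)
  have hs2 : s ^ 2 = ρ₁ / 8 := by
    rw [hs, div_pow, Real.sq_sqrt (by linarith : (0:ℝ) ≤ 2 * ρ₁)]; ring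
  have hsL : s < L / 2 := by
    have h1 : s ^ 2 < (L / 2) ^ 2 := by rw [hs2]; nlinarith
    exact lt_of_pow_lt_pow_left₀ 2 (by positivity) h1
  -- representation of f in terms of u = (y - d₃/2)^2
  have hrep : ∀ y : ℝ, f y =
      (L ^ 2 - 4 * (y - d₃ / 2) ^ 2) / (L ^ 2 * (d₃ ^ 2 / 4 - (y - d₃ / 2) ^ 2) ^ 3) := by
    intro y
    have e1 : 1 - (2 * y - d₃) ^ 2 / L ^ 2 = (L ^ 2 - 4 * (y - d₃ / 2) ^ 2) / L ^ 2 := by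
      field_simp; ring
    have e2 : y ^ 3 * (d₃ - y) ^ 3 = (d₃ ^ 2 / 4 - (y - d₃ / 2) ^ 2) ^ 3 := by ring
    rw [hf y, e1, e2, div_div]
  have husq : ∀ y ∈ Set.Icc ((d₃ - L) / 2) ((d₃ + L) / 2),
      (y - d₃ / 2) ^ 2 ≤ L ^ 2 / 4 := by
    rintro y ⟨h1, h2⟩; nlinarith
  -- value of f at d₃/2 ± s
  have hfct : ∀ t : ℝ, t ^ 2 = ρ₁ / 8 →
      f (d₃ / 2 + t) = 256 / (27 * L ^ 2 * (d₃ ^ 2 - L ^ 2) ^ 2) := by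
    intro t ht
    rw [hrep (d₃ / 2 + t)]
    have e3 : d₃ / 2 + t - d₃ / 2 = t := by ring
    rw [e3, ht]
    rw [div_eq_div_iff]
    · rw [hρ₁]; ring
    · have : 0 < d₃ ^ 2 / 4 - ρ₁ / 8 := by rw [hρ₁]; nlinarith
      positivity
    · positivity
  -- global bound
  have hMkey : ∀ y : ℝ, (y - d₃ / 2) ^ 2 ≤ L ^ 2 / 4 →
      f y ≤ 256 / (27 * L ^ 2 * (d₃ ^ 2 - L ^ 2) ^ 2) := by
    intro y hu
    rw [hrep y]
    have hden1 : 0 < L ^ 2 * (d₃ ^ 2 / 4 - (y - d₃ / 2) ^ 2) ^ 3 := by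
      have : 0 < d₃ ^ 2 / 4 - (y - d₃ / 2) ^ 2 := by nlinarith
      positivity
    have hden2 : (0:ℝ) < 27 * L ^ 2 * (d₃ ^ 2 - L ^ 2) ^ 2 := by positivity
    rw [div_le_div_iff₀ hden1 hden2]
    have hid : 256 * (L ^ 2 * (d₃ ^ 2 / 4 - (y - d₃ / 2) ^ 2) ^ 3) -
        (L ^ 2 - 4 * (y - d₃ / 2) ^ 2) * (27 * L ^ 2 * (d₃ ^ 2 - L ^ 2) ^ 2) =
        256 * L ^ 2 * ((y - d₃ / 2) ^ 2 - (3 * L ^ 2 - d₃ ^ 2) / 8) ^ 2 *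
          ((4 * d₃ ^ 2 - 3 * L ^ 2) / 4 - (y - d₃ / 2) ^ 2) := by ring
    nlinarith [sq_nonneg ((y - d₃ / 2) ^ 2 - (3 * L ^ 2 - d₃ ^ 2) / 8),
      mul_nonneg (mul_nonneg (mul_nonneg (by norm_num : (0:ℝ) ≤ 256) hL2.le)
        (sq_nonneg ((y - d₃ / 2) ^ 2 - (3 * L ^ 2 - d₃ ^ 2) / 8)))
        (by nlinarith : (0:ℝ) ≤ (4 * d₃ ^ 2 - 3 * L ^ 2) / 4 - (y - d₃ / 2) ^ 2)]
  -- equality case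
  have hMeq : ∀ y : ℝ, (y - d₃ / 2) ^ 2 ≤ L ^ 2 / 4 →
      f y = 256 / (27 * L ^ 2 * (d₃ ^ 2 - L ^ 2) ^ 2) →
      y = d₃ / 2 - s ∨ y = d₃ / 2 + s := by
    intro y hu heq
    rw [hrep y] at heq
    have hden1 : 0 < L ^ 2 * (d₃ ^ 2 / 4 - (y - d₃ / 2) ^ 2) ^ 3 := by
      have : 0 < d₃ ^ 2 / 4 - (y - d₃ / 2) ^ 2 := by nlinarith
      positivity
    have hden2 : (0:ℝ) < 27 * L ^ 2 * (d₃ ^ 2 - L ^ 2) ^ 2 := by positivity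
    rw [div_eq_div_iff (ne_of_gt hden1) (ne_of_gt hden2)] at heq
    have hr : 0 < (4 * d₃ ^ 2 - 3 * L ^ 2) / 4 - (y - d₃ / 2) ^ 2 := by nlinarith
    have hsq : ((y - d₃ / 2) ^ 2 - (3 * L ^ 2 - d₃ ^ 2) / 8) ^ 2 = 0 := by
      rcases mul_eq_zero.mp (show (256 * L ^ 2 * ((y - d₃ / 2) ^ 2 - (3 * L ^ 2 - d₃ ^ 2) / 8) ^ 2) *
          ((4 * d₃ ^ 2 - 3 * L ^ 2) / 4 - (y - d₃ / 2) ^ 2) = 0 by linear_combination -heq) with h | h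
      · rcases mul_eq_zero.mp h with h2 | h2
        · exfalso; have : (256 * L ^ 2 : ℝ) ≠ 0 := by positivity
          exact this h2
        · exact h2
      · exact absurd h (ne_of_gt hr)
    have h4 : (y - d₃ / 2) ^ 2 = (3 * L ^ 2 - d₃ ^ 2) / 8 :=
      sub_eq_zero.mp (sq_eq_zero_iff.mp hsq)
    have h5 : (y - (d₃ / 2 - s)) * (y - (d₃ / 2 + s)) = 0 := by
      linear_combination h4 - hs2 - hρ₁ / 8
    rcases mul_eq_zero.mp h5 with h | h
    · left; linarith
    · right; linarith
  have hmem1 : d₃ / 2 - s ∈ Set.Icc ((d₃ - L) / 2) ((d₃ + L) / 2) := by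
    constructor <;> [linarith; linarith]
  have hmem2 : d₃ / 2 + s ∈ Set.Icc ((d₃ - L) / 2) ((d₃ + L) / 2) := by
    constructor <;> [linarith; linarith]
  have hval1 : f (d₃ / 2 - s) = 256 / (27 * L ^ 2 * (d₃ ^ 2 - L ^ 2) ^ 2) := by
    have := hfct (-s) (by rw [neg_pow]; simpa using hs2)
    simpa [sub_eq_add_neg] using this
  have hval2 : f (d₃ / 2 + s) = 256 / (27 * L ^ 2 * (d₃ ^ 2 - L ^ 2) ^ 2) := hfct s hs2
  refine ⟨?_, ?_, ?_⟩
  · -- maximizer set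
    ext x
    simp only [Set.mem_setOf_eq, Set.mem_insert_iff, Set.mem_singleton_iff]
    constructor
    · rintro ⟨hx, hmax⟩
      have h1 : f (d₃ / 2 + s) ≤ f x := hmax _ hmem2
      have h2 : f x ≤ 256 / (27 * L ^ 2 * (d₃ ^ 2 - L ^ 2) ^ 2) := hMkey x (husq x hx)
      have h3 : f x = 256 / (27 * L ^ 2 * (d₃ ^ 2 - L ^ 2) ^ 2) :=
        le_antisymm h2 (hval2 ▸ h1)
      exact hMeq x (husq x hx) h3
    · rintro (rfl | rfl)
      · exact ⟨hmem1, fun y hy => hval1 ▸ hMkey y (husq y hy)⟩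
      · exact ⟨hmem2, fun y hy => hval2 ▸ hMkey y (husq y hy)⟩
  · -- critical points
    have hfe : f = fun x => (1 - (2 * x - d₃) ^ 2 / L ^ 2) / (x ^ 3 * (d₃ - x) ^ 3) :=
      funext hf
    have hd0 : ∀ x : ℝ, 0 < x → x < d₃ → deriv f x =
        (-16 * (x - (d₃ / 2 - s)) * (x - d₃ / 2) * (x - (d₃ / 2 + s))) *
          (x ^ 2 * (d₃ - x) ^ 2 / L ^ 2) / (x ^ 3 * (d₃ - x) ^ 3) ^ 2 := by
      intro x hx0 hxd
      have hq0 : x ^ 3 * (d₃ - x) ^ 3 ≠ 0 :=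
        ne_of_gt (mul_pos (pow_pos hx0 3) (pow_pos (by linarith : (0:ℝ) < d₃ - x) 3))
      have h1 : HasDerivAt (fun y : ℝ => 2 * y - d₃) 2 x := by
        simpa using ((hasDerivAt_id x).const_mul 2).sub_const d₃
      have h2 : HasDerivAt (fun y : ℝ => (2 * y - d₃) ^ 2) (2 * (2 * x - d₃) * 2) x := by
        simpa using h1.fun_pow 2
      have hp : HasDerivAt (fun y : ℝ => 1 - (2 * y - d₃) ^ 2 / L ^ 2)
          (-(2 * (2 * x - d₃) * 2 / L ^ 2)) x := (h2.div_const _).const_sub 1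
      have h3 : HasDerivAt (fun y : ℝ => y ^ 3) (3 * x ^ 2) x := by
        simpa using hasDerivAt_pow 3 x
      have h4 : HasDerivAt (fun y : ℝ => (d₃ - y) ^ 3) (3 * (d₃ - x) ^ 2 * (-1)) x := by
        simpa using ((hasDerivAt_id x).const_sub d₃).fun_pow 3
      have hq : HasDerivAt (fun y : ℝ => y ^ 3 * (d₃ - y) ^ 3)
          (3 * x ^ 2 * (d₃ - x) ^ 3 + x ^ 3 * (3 * (d₃ - x) ^ 2 * (-1))) x := h3.mul h4
      have hd := hp.fun_div hq hq0
      rw [hfe]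
      rw [hd.deriv]
      congr 1
      have hinv : L ^ 2 * (L⁻¹) ^ 2 = 1 := by field_simp
      linear_combination (-(2 * (x - d₃ / 2) * x ^ 2 * (d₃ - x) ^ 2 / L ^ 2)) * hρ₁ +
        (-8 * (2 * (x - d₃ / 2) * x ^ 2 * (d₃ - x) ^ 2 / L ^ 2)) * hs2 +
        (3 * x ^ 2 * (d₃ ^ 3 - 4 * x * d₃ ^ 2 + 5 * x ^ 2 * d₃ - 2 * x ^ 3)) * hinv
    ext x
    simp only [Set.mem_setOf_eq, Set.mem_Ioo, Set.mem_insert_iff, Set.mem_singleton_iff]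
    constructor
    · rintro ⟨⟨hx1, hx2⟩, hdx⟩
      have hx0 : 0 < x := by linarith
      have hxd : x < d₃ := by linarith
      rw [hd0 x hx0 hxd] at hdx
      have hden : ((x ^ 3 * (d₃ - x) ^ 3) ^ 2 : ℝ) ≠ 0 :=
        pow_ne_zero 2 (ne_of_gt (mul_pos (pow_pos hx0 3)
          (pow_pos (by linarith : (0:ℝ) < d₃ - x) 3)))
      rw [div_eq_zero_iff] at hdx
      rcases hdx with hdx | hdx
      · rcases mul_eq_zero.mp hdx with h | h
        · have h6 : (x - (d₃ / 2 - s)) * ((x - d₃ / 2) * (x - (d₃ / 2 + s))) = 0 := by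
            linear_combination (-1 / 16 : ℝ) * h
          rcases mul_eq_zero.mp h6 with h7 | h7
          · left; linarith
          rcases mul_eq_zero.mp h7 with h8 | h8
          · right; left; linarith
          · right; right; linarith
        · exfalso
          have : (0:ℝ) < x ^ 2 * (d₃ - x) ^ 2 / L ^ 2 :=
            div_pos (mul_pos (pow_pos hx0 2) (pow_pos (by linarith : (0:ℝ) < d₃ - x) 2)) hL2
          exact (ne_of_gt this) h
      · exact absurd hdx hden
    · have hIoo : ∀ z : ℝ, (d₃ - L) / 2 < z → z < (d₃ + L) / 2 →
          ((d₃ - L) / 2 < z ∧ z < (d₃ + L) / 2) := fun z h1 h2 => ⟨h1, h2⟩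
      rintro (rfl | rfl | rfl)
      · refine ⟨⟨by linarith, by linarith⟩, ?_⟩
        rw [hd0 _ (by linarith) (by linarith)]
        ring_nf
      · refine ⟨⟨by linarith, by linarith⟩, ?_⟩
        rw [hd0 _ (by linarith) (by linarith)]
        ring_nf
      · refine ⟨⟨by linarith, by linarith⟩, ?_⟩
        rw [hd0 _ (by linarith) (by linarith)]
        ring_nf
  · -- strict local minimum at d₃/2
    have h3L : 0 < 3 * L ^ 2 - d₃ ^ 2 := by linarith
    set δ : ℝ := min (d₃ / 2) (d₃ * (3 * L ^ 2 - d₃ ^ 2) / (8 * L ^ 2)) with hδdef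
    have hδpos : 0 < δ := lt_min (by linarith)
      (div_pos (mul_pos (by linarith : (0:ℝ) < d₃) h3L) (by positivity))
    rw [eventually_nhdsWithin_iff]
    filter_upwards [Metric.ball_mem_nhds (d₃ / 2) hδpos] with y hy hne
    have hne' : y ≠ d₃ / 2 := by simpa using hne
    have hdist : |y - d₃ / 2| < δ := by
      rw [← Real.dist_eq]; exact Metric.mem_ball.mp hy
    have ht0 : y - d₃ / 2 ≠ 0 := sub_ne_zero.mpr hne'
    have hu0 : 0 < (y - d₃ / 2) ^ 2 := by positivity
    have hu1 : (y - d₃ / 2) ^ 2 < δ ^ 2 := by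
      have h1 : 0 ≤ |y - d₃ / 2| := abs_nonneg _
      nlinarith [sq_abs (y - d₃ / 2)]
    have hδ1 : δ ≤ d₃ / 2 := min_le_left _ _
    have hδ2 : δ ≤ d₃ * (3 * L ^ 2 - d₃ ^ 2) / (8 * L ^ 2) := min_le_right _ _
    have hub : (y - d₃ / 2) ^ 2 < (d₃ / 2) ^ 2 * (3 * L ^ 2 - d₃ ^ 2) / (4 * L ^ 2) := by
      have hδsq : δ ^ 2 ≤ (d₃ / 2) * (d₃ * (3 * L ^ 2 - d₃ ^ 2) / (8 * L ^ 2)) := by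
        rw [sq]
        exact mul_le_mul hδ1 hδ2 hδpos.le (by linarith)
      have : (d₃ / 2) * (d₃ * (3 * L ^ 2 - d₃ ^ 2) / (8 * L ^ 2)) ≤
          (d₃ / 2) ^ 2 * (3 * L ^ 2 - d₃ ^ 2) / (4 * L ^ 2) := le_of_eq (by ring)
      linarith
    have hult : (y - d₃ / 2) ^ 2 < d₃ ^ 2 / 4 := by
      have : δ ^ 2 ≤ (d₃ / 2) ^ 2 := by nlinarith
      nlinarith
    rw [hrep (d₃ / 2), hrep y]
    have e0 : (d₃ / 2 - d₃ / 2) ^ 2 = 0 := by ring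
    rw [e0]
    have hden1 : 0 < L ^ 2 * (d₃ ^ 2 / 4 - 0) ^ 3 :=
      mul_pos hL2 (pow_pos (by nlinarith : (0:ℝ) < d₃ ^ 2 / 4 - 0) 3)
    have hden2 : 0 < L ^ 2 * (d₃ ^ 2 / 4 - (y - d₃ / 2) ^ 2) ^ 3 := by
      have : 0 < d₃ ^ 2 / 4 - (y - d₃ / 2) ^ 2 := by linarith
      positivity
    rw [div_lt_div_iff₀ hden1 hden2]
    have hd3 : (0:ℝ) < d₃ := by linarith
    have hd3sq : (0:ℝ) < d₃ ^ 2 / 4 := by nlinarith [mul_pos hd3 hd3]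
    have hub' := mul_lt_mul_of_pos_left hub
      (show (0:ℝ) < 3 * (d₃ ^ 2 / 4) * L ^ 2 by nlinarith [mul_pos hd3sq hL2])
    have h9 : 3 * (d₃ ^ 2 / 4) * L ^ 2 * ((d₃ / 2) ^ 2 * (3 * L ^ 2 - d₃ ^ 2) / (4 * L ^ 2)) =
        3 / 4 * ((d₃ ^ 2 / 4) ^ 2 * (3 * L ^ 2 - d₃ ^ 2)) := by
      field_simp; ring
    have hpos9 : 0 < (d₃ ^ 2 / 4) ^ 2 * (3 * L ^ 2 - d₃ ^ 2) := mul_pos (pow_pos hd3sq 2) h3L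
    have hnn : (0:ℝ) ≤ L ^ 2 * ((y - d₃ / 2) ^ 2) ^ 2 := by positivity
    nlinarith [mul_pos hu0 (show 0 < L ^ 2 * ((y - d₃ / 2) ^ 2) ^ 2 -
        3 * (d₃ ^ 2 / 4) * L ^ 2 * (y - d₃ / 2) ^ 2 +
        (d₃ ^ 2 / 4) ^ 2 * (3 * L ^ 2 - d₃ ^ 2) by linarith)]
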